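/- Let m ≥ 1, B ≥ 1, and α be natural numbers with 2^α ≥ m + 1. Then for every t with 0 ≤ t < m, the binomial coefficient C(2m + 2^α·B - 2t, m - t) is even. -/

import Mathlib

lemma even_choose_aux (n k : ℕ) (hk : 1 ≤ k) (hkn : k ≤ n)
    (hd : 2 ^ (padicValNat 2 k + 1) ∣ n) : 2 ∣ n.choose k := by
  set j := padicValNat 2 k with hj
  set u := ordCompl[2] k with hu
  have hprime : Nat.Prime 2 := Nat.prime_two
  have huodd : ¬ 2 ∣ u := Nat.not_dvd_ordCompl hprime (by omega)
  have hk' : 2 ^ j * u = k := Nat.ordProj_mul_ordCompl_eq_self k 2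
  have key : n * Nat.choose (n - 1) (k - 1) = Nat.choose n k * k := by
    have := Nat.add_one_mul_choose_eq (n - 1) (k - 1)
    have h1 : n - 1 + 1 = n := by omega
    have h2 : k - 1 + 1 = k := by omega
    simpa [Nat.succ_eq_add_one, h1, h2] using this
  have hdvd : 2 ^ (j + 1) ∣ Nat.choose n k * k := key ▸ Dvd.dvd.mul_right hd _
  have heq : Nat.choose n k * k = Nat.choose n k * u * 2 ^ j := by rw [← hk']; ring
  rw [heq] at hdvd
  have hpos : 0 < 2 ^ j := Nat.pow_pos (by norm_num)
  have h3 : 2 ∣ Nat.choose n k * u := by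
    have h2 : 2 * 2 ^ j ∣ Nat.choose n k * u * 2 ^ j := by
      calc 2 * 2 ^ j = 2 ^ (j + 1) := by ring
      _ ∣ _ := hdvd
    exact (Nat.mul_dvd_mul_iff_right hpos).mp h2
  rcases (Nat.Prime.dvd_mul hprime).mp h3 with h | h
  · exact h
  · exact absurd h huodd

theorem stmt_3 (m B α : ℕ) (hm : 1 ≤ m) (hB : 1 ≤ B) (hα : m + 1 ≤ 2 ^ α)
    (t : ℕ) (ht : t < m) :
    2 ∣ Nat.choose (2 * m + 2 ^ α * B - 2 * t) (m - t) := by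
  set k := m - t with hk
  have hk1 : 1 ≤ k := by omega
  have hn : 2 * m + 2 ^ α * B - 2 * t = 2 * k + 2 ^ α * B := by omega
  rw [hn]
  set j := padicValNat 2 k with hj
  have hjk : 2 ^ j ∣ k := Nat.ordProj_dvd k 2
  have hjα : j + 1 ≤ α := by
    have h1 : 2 ^ j ≤ k := Nat.le_of_dvd (by omega) hjk
    have h2 : 2 ^ j < 2 ^ α := by omega
    have := (Nat.pow_lt_pow_iff_right (by norm_num : 1 < 2)).mp h2
    omega
  apply even_choose_aux
  · exact hk1
  · have hpos : 0 < 2 ^ α * B := Nat.mul_pos (Nat.pow_pos (by norm_num)) hB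
    omega
  · apply Nat.dvd_add
    · rw [pow_succ, mul_comm]
      exact Nat.mul_dvd_mul_left 2 hjk
    · exact Dvd.dvd.mul_right (pow_dvd_pow 2 hjα) B
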